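/- Let p be a prime and K an algebraically closed field of characteristic p. Let ι : W(K[[t]]) → W(K((t))) be the injective ring homomorphism of p-typical Witt vector rings induced by the inclusion of the power series ring K[[t]] into the Laurent series field K((t)). If x ∈ W(K((t))) and p^n·x lies in the image of ι for some n ≥ 0, then x lies in the image of ι. (Equivalently, W(K((t))) ∩ W(K[[t]])[1/p] = W(K[[t]]) inside W(K((t)))[1/p].) -/

import Mathlib

open HahnSeries WittVector

/-- A Laurent series lies in the image of the power series ring iff all its
negatively-indexed coefficients vanish. -/
lemma mem_range_ofPowerSeries_iff {K : Type*} [Field K] (z : LaurentSeries K) :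
    z ∈ Set.range (HahnSeries.ofPowerSeries ℤ K) ↔ ∀ m : ℤ, m < 0 → z.coeff m = 0 := by
  constructor
  · rintro ⟨f, rfl⟩ m hm
    rw [PowerSeries.coeff_coe, if_pos hm]
  · intro hz
    refine ⟨PowerSeries.mk fun n => z.coeff n, ?_⟩
    ext i
    rw [show ((HahnSeries.ofPowerSeries ℤ K) (PowerSeries.mk fun n => z.coeff (n : ℤ)) : LaurentSeries K)
        = (((PowerSeries.mk fun n => z.coeff (n : ℤ)) : PowerSeries K) : LaurentSeries K) from rfl,
      PowerSeries.coeff_coe]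
    split_ifs with h
    · exact (hz i h).symm
    · rw [PowerSeries.coeff_mk, Int.natAbs_of_nonneg (not_lt.mp h)]

/-- If a positive power of a Laurent series is a power series, so is the series itself. -/
lemma pow_mem_range_ofPowerSeries {K : Type*} [Field K] (z : LaurentSeries K) (k : ℕ)
    (hk : 0 < k) (h : z ^ k ∈ Set.range (HahnSeries.ofPowerSeries ℤ K)) :
    z ∈ Set.range (HahnSeries.ofPowerSeries ℤ K) := by
  rw [mem_range_ofPowerSeries_iff] at h ⊢
  rcases eq_or_ne z 0 with rfl | hz
  · simp
  · intro m hm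
    have hzk : z ^ k ≠ 0 := pow_ne_zero _ hz
    have horder : 0 ≤ (z ^ k).order := by
      by_contra hlt
      exact hzk (HahnSeries.coeff_order_eq_zero.mp (h _ (not_le.mp hlt)))
    rw [HahnSeries.order_pow z k] at horder
    have h0 : (0 : ℤ) ≤ z.order := by
      rcases le_or_gt 0 z.order with h' | h'
      · exact h'
      · exfalso
        have : (k : ℤ) • z.order < 0 := by
          have : (0 : ℤ) < (k : ℤ) := by exact_mod_cast hk
          simpa [zsmul_eq_mul] using mul_neg_of_pos_of_neg this h'
        simp only [natCast_zsmul] at this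
        exact absurd horder (not_le.mpr this)
    exact HahnSeries.coeff_eq_zero_of_lt_order (lt_of_lt_of_le hm h0)

/-- Let `K` be an algebraically closed field of characteristic `p` and let
`ι : W(K[[t]]) → W(K((t)))` be induced by the inclusion `K[[t]] ↪ K((t))`.
If `p^n · x` lies in the image of `ι` for some `x ∈ W(K((t)))`, then `x` lies
in the image of `ι`; i.e. `W(K((t))) ∩ W(K[[t]])[1/p] = W(K[[t]])`. -/
theorem witt_laurent_powerSeries_saturated
    (p : ℕ) [Fact p.Prime] (K : Type*) [Field K] [IsAlgClosed K] [CharP K p]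
    (x : WittVector p (LaurentSeries K)) (n : ℕ)
    (h : (p : WittVector p (LaurentSeries K)) ^ n * x ∈
      (WittVector.map (p := p) (HahnSeries.ofPowerSeries ℤ K)).range) :
    x ∈ (WittVector.map (p := p) (HahnSeries.ofPowerSeries ℤ K)).range := by
  have hL : CharP (LaurentSeries K) p :=
    charP_of_injective_ringHom (HahnSeries.C_injective (Γ := ℤ) (R := K)) p
  -- membership in the range of `map` is determined coefficientwise
  have key : ∀ y : WittVector p (LaurentSeries K),
      (∀ i, y.coeff i ∈ Set.range (HahnSeries.ofPowerSeries ℤ K)) →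
      y ∈ (WittVector.map (p := p) (HahnSeries.ofPowerSeries ℤ K)).range := by
    intro y hy
    choose a ha using hy
    refine ⟨WittVector.mk p a, ?_⟩
    ext i
    rw [WittVector.map_coeff, WittVector.coeff_mk, ha]
  -- single step: if `p * y` is in the range, so is `y`
  have step : ∀ y : WittVector p (LaurentSeries K),
      (p : WittVector p (LaurentSeries K)) * y ∈
        (WittVector.map (p := p) (HahnSeries.ofPowerSeries ℤ K)).range →
      y ∈ (WittVector.map (p := p) (HahnSeries.ofPowerSeries ℤ K)).range := by
    intro y hy
    obtain ⟨w, hw⟩ := hy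
    refine key y fun i => ?_
    apply pow_mem_range_ofPowerSeries _ p (Fact.out (p := p.Prime)).pos
    have : (y * (p : WittVector p (LaurentSeries K))).coeff (i + 1) = y.coeff i ^ p :=
      WittVector.mul_charP_coeff_succ (p := p) y i
    rw [← this, mul_comm, ← hw, WittVector.map_coeff]
    exact ⟨w.coeff (i + 1), rfl⟩
  induction n generalizing x with
  | zero => simpa using h
  | succ n ih =>
    apply step
    apply ih
    rw [← mul_assoc, ← pow_succ]
    exact h
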